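/- Let n ≥ 2, σ > 0, and let s, ŝ ∈ ℝⁿ with s ≠ 0, δ = ‖s − ŝ‖ > 0, and ŝ − s not a scalar multiple of s. Set u = −s/‖s‖, cos θ = (‖s‖² + δ² − ‖ŝ‖²)/(2‖s‖δ) with θ ∈ (0, π), and β(z) = (δ − 2z cos θ)/(2 sin θ) for z ∈ ℝ. Let G be a random vector in ℝⁿ whose coordinates are independent Gaussian with mean 0 and variance σ², and let W = G − ⟨G, u⟩ u be its orthogonal projection onto the hyperplane u^⊥. Then for every z ∈ ℝ, P(‖s + (z u + W) − ŝ‖ ≤ ‖z u + W‖) = Q(β(z)/σ), where Q(x) = ∫_x^∞ (1/√(2π)) e^{−t²/2} dt. -/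

import Mathlib

open MeasureTheory ProbabilityTheory

/-- The distribution of an `n`-dimensional random vector whose coordinates are
independent Gaussian random variables with mean `0` and variance `σ²`. -/
noncomputable def gaussianVec (n : ℕ) (σ : ℝ) : Measure (EuclideanSpace ℝ (Fin n)) :=
  Measure.map (WithLp.toLp 2) (Measure.pi fun _ : Fin n => gaussianReal 0 ⟨σ ^ 2, sq_nonneg σ⟩)

/-- The Gaussian tail function `Q(x) = ∫_x^∞ (1/√(2π)) e^{-t²/2} dt`. -/
noncomputable def Qfun (x : ℝ) : ℝ :=
  ∫ t in Set.Ioi x, (1 / Real.sqrt (2 * Real.pi)) * Real.exp (-(t ^ 2) / 2)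

open Set

lemma lintegral_fin_prod : ∀ {n : ℕ} (f : Fin n → ℝ → ENNReal), (∀ i, Measurable (f i)) →
    ∫⁻ x : Fin n → ℝ, ∏ i, f i (x i) ∂(Measure.pi fun _ => (volume : Measure ℝ))
      = ∏ i, ∫⁻ x, f i x := by
  intro n
  induction n with
  | zero =>
    intro f _
    simp [lintegral_const, Measure.pi_univ]
  | succ n ih =>
    intro f hf
    have hmp := (measurePreserving_piFinSuccAbove (fun _ : Fin (n+1) => (volume : Measure ℝ)) 0).symm
    have hmeas : Measurable fun x : Fin (n+1) → ℝ => ∏ i, f i (x i) :=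
      Finset.measurable_prod _ fun i _ => (hf i).comp (measurable_pi_apply i)
    rw [← hmp.lintegral_comp hmeas]
    simp_rw [MeasurableEquiv.piFinSuccAbove_symm_apply, Fin.insertNthEquiv,
      Fin.prod_univ_succ, Fin.insertNth_zero]
    simp only [Fin.zero_succAbove, Function.comp_def, Fin.cons_zero, Fin.cons_succ,
      Equiv.coe_fn_mk, cast_eq]
    rw [lintegral_prod_mul (μ := (volume : Measure ℝ))
      (ν := Measure.pi fun _ : Fin n => (volume : Measure ℝ))
      (f := f 0) (g := fun x : Fin n → ℝ => ∏ i, f i.succ (x i)) ((hf 0).aemeasurable)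
      ((Finset.measurable_prod _ fun i _ => (hf i.succ).comp (measurable_pi_apply i)).aemeasurable)]
    rw [ih (fun i => f i.succ) (fun i => hf i.succ)]

lemma pi_withDensity {n : ℕ} (f : Fin n → ℝ → ENNReal) (hf : ∀ i, Measurable (f i))
    (hfin : ∀ i, SigmaFinite ((volume : Measure ℝ).withDensity (f i))) :
    (Measure.pi fun i => (volume : Measure ℝ).withDensity (f i))
      = (Measure.pi fun _ => (volume : Measure ℝ)).withDensity fun x => ∏ i, f i (x i) := by
  haveI := hfin
  refine Measure.pi_eq (μ := fun i => (volume : Measure ℝ).withDensity (f i)) fun s hs => ?_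
  rw [withDensity_apply _ (MeasurableSet.univ_pi hs), ← lintegral_indicator (MeasurableSet.univ_pi hs) (f := fun x : Fin n → ℝ => ∏ i, f i (x i))]
  have key : ∀ x : Fin n → ℝ, (Set.univ.pi s).indicator (fun x => ∏ i, f i (x i)) x
      = ∏ i, (s i).indicator (f i) (x i) := by
    intro x
    by_cases hx : x ∈ Set.univ.pi s
    · rw [Set.indicator_of_mem hx]
      exact Finset.prod_congr rfl fun i _ => (Set.indicator_of_mem (hx i trivial) _).symm
    · rw [Set.indicator_of_notMem hx]
      rw [Set.mem_univ_pi] at hx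
      push_neg at hx
      obtain ⟨i, hi⟩ := hx
      exact (Finset.prod_eq_zero (Finset.mem_univ i) (by rw [Set.indicator_of_notMem hi])).symm
  simp_rw [key]
  rw [lintegral_fin_prod _ (fun i => (hf i).indicator (hs i))]
  exact Finset.prod_congr rfl fun i _ => by
    rw [lintegral_indicator (hs i), withDensity_apply _ (hs i)]


lemma volE_eq (n : ℕ) :
    (volume : Measure (EuclideanSpace ℝ (Fin n)))
      = Measure.map (WithLp.toLp 2) (Measure.pi fun _ : Fin n => (volume : Measure ℝ)) := by
  have h := (EuclideanSpace.volume_preserving_symm_measurableEquiv_toLp (Fin n)).symm.map_eq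
  rw [MeasurableEquiv.symm_symm, MeasurableEquiv.coe_toLp] at h
  rw [← volume_pi, h]

lemma gaussianVec_density {n : ℕ} {σ : ℝ} (hσ : 0 < σ) :
    gaussianVec n σ = (volume : Measure (EuclideanSpace ℝ (Fin n))).withDensity
      (fun x => ENNReal.ofReal
        ((Real.sqrt (2 * Real.pi * (σ ^ 2)))⁻¹ ^ n * Real.exp (-‖x‖ ^ 2 / (2 * σ ^ 2)))) := by
  have hv : (⟨σ ^ 2, sq_nonneg σ⟩ : NNReal) ≠ 0 := by
    simp only [ne_eq, ← NNReal.coe_inj]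
    push_neg
    simpa using (pow_pos hσ 2).ne'
  have h1 : gaussianVec n σ
      = Measure.map (WithLp.toLp 2) (Measure.pi fun _ : Fin n =>
          (volume : Measure ℝ).withDensity (gaussianPDF 0 ⟨σ ^ 2, sq_nonneg σ⟩)) := by
    unfold gaussianVec
    refine congrArg _ (congrArg _ (funext fun i => ?_))
    exact gaussianReal_of_var_ne_zero 0 hv
  rw [h1]
  have hfin : ∀ _ : Fin n, SigmaFinite
      ((volume : Measure ℝ).withDensity (gaussianPDF 0 ⟨σ ^ 2, sq_nonneg σ⟩)) := by
    intro i
    rw [← gaussianReal_of_var_ne_zero 0 hv]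
    exact (fun v : NNReal => (inferInstance : SigmaFinite (gaussianReal 0 v))) _
  rw [pi_withDensity _ (fun _ => measurable_gaussianPDF _ _) hfin, volE_eq]
  ext A hA
  rw [Measure.map_apply (WithLp.measurable_toLp 2 _) hA,
    withDensity_apply _ ((WithLp.measurable_toLp 2 _) hA), withDensity_apply _ hA]
  refine Eq.trans ?_ (setLIntegral_map hA (Measurable.ennreal_ofReal (measurable_const.mul
      ((measurable_norm.pow_const 2).neg.div_const _).exp)) (WithLp.measurable_toLp 2 _)).symm
  congr 1
  funext x
  rw [show (fun i : Fin n => gaussianPDF 0 ⟨σ ^ 2, sq_nonneg σ⟩ (x i))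
      = fun i : Fin n => ENNReal.ofReal (gaussianPDFReal 0 ⟨σ ^ 2, sq_nonneg σ⟩ (x i)) from rfl]
  refine (ENNReal.ofReal_prod_of_nonneg (fun i _ => gaussianPDFReal_nonneg _ _ _)).symm.trans ?_
  congr 1
  unfold gaussianPDFReal
  simp only [show ((⟨σ ^ 2, sq_nonneg σ⟩ : NNReal) : ℝ) = σ ^ 2 from rfl, NNReal.coe_mk, sub_zero]
  rw [Finset.prod_mul_distrib, Finset.prod_const, ← Real.exp_sum]
  congr 2
  · simp
  change (∑ i, -x i ^ 2 / (2 * σ ^ 2)) = -‖WithLp.toLp 2 x‖ ^ 2 / (2 * σ ^ 2)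
  rw [← Finset.sum_div, EuclideanSpace.norm_eq]
  rw [Real.sq_sqrt (Finset.sum_nonneg fun i _ => sq_nonneg _)]
  simp only [Real.norm_eq_abs, sq_abs, neg_div, Finset.sum_neg_distrib, Finset.sum_div,
    PiLp.toLp_apply]

lemma gaussianVec_inv {n : ℕ} {σ : ℝ} (hσ : 0 < σ)
    (T : EuclideanSpace ℝ (Fin n) ≃ₗᵢ[ℝ] EuclideanSpace ℝ (Fin n))
    {A : Set (EuclideanSpace ℝ (Fin n))} (hA : MeasurableSet A) :
    gaussianVec n σ (T ⁻¹' A) = gaussianVec n σ A := by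
  set D : EuclideanSpace ℝ (Fin n) → ENNReal := fun x => ENNReal.ofReal
      ((Real.sqrt (2 * Real.pi * (σ ^ 2)))⁻¹ ^ n * Real.exp (-‖x‖ ^ 2 / (2 * σ ^ 2))) with hD
  have hDmeas : Measurable D := by
    apply Measurable.ennreal_ofReal
    exact (measurable_const.mul ((measurable_norm.pow_const 2).neg.div_const _).exp)
  have hDT : ∀ x, D (T x) = D x := fun x => by rw [hD]; simp [T.norm_map]
  rw [gaussianVec_density hσ, ← hD,
    withDensity_apply _ (T.continuous.measurable hA),
    withDensity_apply _ hA]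
  have hmp : MeasurePreserving T volume volume := T.measurePreserving
  calc ∫⁻ x in T ⁻¹' A, D x = ∫⁻ x in T ⁻¹' A, D (T x) := by simp_rw [hDT]
    _ = ∫⁻ y in A, D y ∂(Measure.map T volume) :=
        (setLIntegral_map hA hDmeas hmp.measurable).symm
    _ = ∫⁻ y in A, D y := by rw [hmp.map_eq]

lemma gaussianReal_Ici_toReal {σ : ℝ} (hσ : 0 < σ) (a : ℝ) :
    ((gaussianReal 0 ⟨σ ^ 2, sq_nonneg σ⟩) (Ici a)).toReal = Qfun (a / σ) := by
  have hv : (⟨σ ^ 2, sq_nonneg σ⟩ : NNReal) ≠ 0 := by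
    simp only [ne_eq, ← NNReal.coe_inj]; push_neg; simpa using (pow_pos hσ 2).ne'
  rw [gaussianReal_apply_eq_integral 0 hv (Ici a),
    ENNReal.toReal_ofReal (by exact setIntegral_nonneg measurableSet_Ici (fun x _ => gaussianPDFReal_nonneg _ _ _))]
  rw [integral_Ici_eq_integral_Ioi]
  set g : ℝ → ℝ := fun x => gaussianPDFReal 0 ⟨σ ^ 2, sq_nonneg σ⟩ x with hg
  have h := integral_comp_mul_left_Ioi g (a / σ) hσ
  rw [show σ * (a / σ) = a by field_simp] at h
  have h2 : ∫ x in Ioi a, g x = σ • ∫ x in Ioi (a / σ), g (σ * x) := by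
    rw [h, smul_smul, mul_inv_cancel₀ hσ.ne', one_smul]
  rw [h2, ← integral_smul]
  unfold Qfun
  apply integral_congr_ae
  filter_upwards with x
  rw [hg]
  unfold gaussianPDFReal
  have hsq : Real.sqrt (2 * Real.pi * (σ ^ 2)) = Real.sqrt (2 * Real.pi) * σ := by
    rw [Real.sqrt_mul (by positivity), Real.sqrt_sq hσ.le]
  simp only [show ((⟨σ ^ 2, sq_nonneg σ⟩ : NNReal) : ℝ) = σ ^ 2 from rfl, NNReal.coe_mk, sub_zero,
    smul_eq_mul, hsq]
  change σ * ((Real.sqrt (2 * Real.pi * σ ^ 2))⁻¹ * Real.exp (-(σ * x) ^ 2 / (2 * σ ^ 2))) = _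
  rw [hsq]
  have hπ : Real.sqrt (2 * Real.pi) ≠ 0 := by positivity
  rw [show -(σ * x) ^ 2 / (2 * σ ^ 2) = -(x ^ 2) / 2 by field_simp]
  field_simp

lemma gaussianVec_halfspace {n : ℕ} (hn : 2 ≤ n) {σ : ℝ} (hσ : 0 < σ)
    (w : EuclideanSpace ℝ (Fin n)) (hw : ‖w‖ = 1) (a : ℝ) :
    gaussianVec n σ {g | a ≤ (inner ℝ g w : ℝ)}
      = gaussianReal 0 ⟨σ ^ 2, sq_nonneg σ⟩ (Ici a) := by
  have h0 : 0 < n := by omega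
  set i0 : Fin n := ⟨0, h0⟩
  set e₀ : EuclideanSpace ℝ (Fin n) := EuclideanSpace.single i0 (1 : ℝ) with he
  have he₀ : ‖e₀‖ = ‖w‖ := by rw [hw, he, EuclideanSpace.norm_single, norm_one]
  set T := Submodule.reflection (ℝ ∙ (e₀ - w))ᗮ with hT
  have hTe : T e₀ = w := Submodule.reflection_sub he₀
  have hA : MeasurableSet {g : EuclideanSpace ℝ (Fin n) | a ≤ (inner ℝ g w : ℝ)} := by
    have : Continuous fun g : EuclideanSpace ℝ (Fin n) => (inner ℝ g w : ℝ) :=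
      continuous_id.inner continuous_const
    exact measurableSet_le measurable_const this.measurable
  have hpre : T ⁻¹' {g : EuclideanSpace ℝ (Fin n) | a ≤ (inner ℝ g w : ℝ)}
      = {g : EuclideanSpace ℝ (Fin n) | a ≤ g i0} := by
    ext g
    simp only [Set.mem_preimage, Set.mem_setOf_eq]
    rw [← hTe, LinearIsometryEquiv.inner_map_map]
    rw [he, EuclideanSpace.inner_single_right]
    simp
  rw [← gaussianVec_inv hσ T hA, hpre]
  have hcyl : WithLp.toLp 2 ⁻¹' {g : EuclideanSpace ℝ (Fin n) | a ≤ g i0}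
      = Set.univ.pi fun j : Fin n => if j = i0 then Ici a else (univ : Set ℝ) := by
    ext g
    simp only [Set.mem_preimage, Set.mem_setOf_eq, Set.mem_univ_pi, PiLp.toLp_apply]
    constructor
    · intro hg j
      by_cases hj : j = i0
      · subst hj; simpa using hg
      · simp [hj]
    · intro hg
      have := hg i0
      simpa using this
  unfold gaussianVec
  rw [Measure.map_apply (WithLp.measurable_toLp 2 _)
    (measurableSet_le measurable_const (by fun_prop)), hcyl]
  haveI : ∀ i : Fin n, SigmaFinite (gaussianReal 0 ⟨σ ^ 2, sq_nonneg σ⟩) :=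
    fun _ => (fun v : NNReal => (inferInstance : SigmaFinite (gaussianReal 0 v))) _
  haveI : IsProbabilityMeasure (gaussianReal 0 ⟨σ ^ 2, sq_nonneg σ⟩) :=
    (fun v : NNReal => (inferInstance : IsProbabilityMeasure (gaussianReal 0 v))) _
  refine (Measure.pi_pi (fun _ : Fin n => gaussianReal 0 ⟨σ ^ 2, sq_nonneg σ⟩)
    (fun j => if j = i0 then Ici a else (univ : Set ℝ))).trans ?_
  rw [Finset.prod_eq_single i0 (fun b _ hb => by rw [if_neg hb, measure_univ])
    (fun h => absurd (Finset.mem_univ i0) h), if_pos rfl]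

/-- **Conditional pair-wise error probability of the tangential bound.**
Decompose the Gaussian noise into the radial component (along `u = -s/‖s‖`)
and the tangential component `W = G - ⟪G, u⟫ u`. With `δ = ‖s - s'‖`,
`cos θ = (‖s‖² + δ² - ‖s'‖²)/(2‖s‖δ)` (`θ ∈ (0, π)` since `s' - s` is not a
scalar multiple of `s`), and `β(z) = (δ - 2z cos θ)/(2 sin θ)`, conditioning
the radial component on the value `z` gives
`P(‖s + (z u + W) - s'‖ ≤ ‖z u + W‖) = Q(β(z)/σ)`. -/
theorem tangential_bound_conditional_pairwise
    (n : ℕ) (hn : 2 ≤ n) (σ : ℝ) (hσ : 0 < σ)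
    (s s' : EuclideanSpace ℝ (Fin n)) (hs : s ≠ 0) (hne : s ≠ s')
    (hncol : ∀ t : ℝ, s' - s ≠ t • s)
    (u : EuclideanSpace ℝ (Fin n)) (hu : u = -(‖s‖⁻¹ • s))
    (θ : ℝ)
    (hθ : θ = Real.arccos
      ((‖s‖ ^ 2 + ‖s - s'‖ ^ 2 - ‖s'‖ ^ 2) / (2 * ‖s‖ * ‖s - s'‖)))
    (β : ℝ → ℝ)
    (hβ : ∀ z, β z = (‖s - s'‖ - 2 * z * Real.cos θ) / (2 * Real.sin θ))
    (z : ℝ) :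
    (gaussianVec n σ
        {g | ‖s + (z • u + (g - (inner ℝ g u : ℝ) • u)) - s'‖ ≤
          ‖z • u + (g - (inner ℝ g u : ℝ) • u)‖}).toReal = Qfun (β z / σ) := by
  have hsnorm : (0:ℝ) < ‖s‖ := norm_pos_iff.mpr hs
  have hδ : (0:ℝ) < ‖s - s'‖ := norm_pos_iff.mpr (sub_ne_zero.mpr hne)
  set δ : ℝ := ‖s - s'‖ with hδdef
  set v : EuclideanSpace ℝ (Fin n) := s' - s with hv
  have hδv : ‖v‖ = δ := by rw [hv, hδdef, norm_sub_rev]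
  have hu1 : ‖u‖ = 1 := by
    rw [hu, norm_neg, norm_smul, Real.norm_eq_abs, abs_of_pos (inv_pos.mpr hsnorm),
      inv_mul_cancel₀ hsnorm.ne']
  set q : ℝ := (inner ℝ u v : ℝ) with hq
  set w : EuclideanSpace ℝ (Fin n) := v - q • u with hwdef
  set c : ℝ := ‖v‖ ^ 2 / 2 - z * q with hc
  -- step 1 : rewrite the event as a half-space
  have hSet : {g : EuclideanSpace ℝ (Fin n) |
        ‖s + (z • u + (g - (inner ℝ g u : ℝ) • u)) - s'‖ ≤
          ‖z • u + (g - (inner ℝ g u : ℝ) • u)‖}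
      = {g : EuclideanSpace ℝ (Fin n) | c ≤ (inner ℝ g w : ℝ)} := by
    ext g
    simp only [Set.mem_setOf_eq]
    set x : EuclideanSpace ℝ (Fin n) := z • u + (g - (inner ℝ g u : ℝ) • u) with hx
    have h1 : s + x - s' = x - v := by rw [hv]; abel
    have hinner : (inner ℝ x v : ℝ) = z * q + (inner ℝ g w : ℝ) := by
      rw [hx, hwdef, hq]
      simp only [inner_add_left, inner_sub_left, inner_sub_right, real_inner_smul_left,
        real_inner_smul_right]
      ring
    rw [h1, ← pow_le_pow_iff_left₀ (norm_nonneg (x - v)) (norm_nonneg x) two_ne_zero,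
      norm_sub_sq_real, hinner, hc]
    constructor <;> intro h <;> linarith
  -- properties of q and w
  have habsq : |q| < δ := by
    rw [abs_lt]
    constructor
    · have h2 : (inner ℝ u (-v) : ℝ) < ‖u‖ * ‖-v‖ := by
        rw [inner_lt_norm_mul_iff_real]
        intro hcon
        apply hncol (‖v‖ * ‖s‖⁻¹)
        have h3 : v = -(‖v‖ • u) := by
          rw [norm_neg, hu1, one_smul] at hcon
          rw [hcon, neg_neg]
        calc v = -(‖v‖ • u) := h3
          _ = (‖v‖ * ‖s‖⁻¹) • s := by rw [hu]; simp [smul_smul]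
      rw [inner_neg_right, norm_neg, hu1, one_mul, hδv] at h2
      linarith
    · have h2 : (inner ℝ u v : ℝ) < ‖u‖ * ‖v‖ := by
        rw [inner_lt_norm_mul_iff_real]
        intro hcon
        apply hncol (-(‖v‖ * ‖s‖⁻¹))
        have h3 : v = ‖v‖ • u := by rw [hcon, hu1, one_smul]
        calc v = ‖v‖ • u := h3
          _ = (-(‖v‖ * ‖s‖⁻¹)) • s := by rw [hu]; simp [smul_smul]
      rw [hu1, one_mul, hδv] at h2
      exact h2
  have hvu : (inner ℝ v u : ℝ) = q := by rw [hq]; exact real_inner_comm u v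
  have hw2 : ‖w‖ ^ 2 = δ ^ 2 - q ^ 2 := by
    rw [hwdef, norm_sub_sq_real, real_inner_smul_right, hvu,
      norm_smul, Real.norm_eq_abs, mul_pow, sq_abs, hu1, hδv]
    ring
  have hwpos : (0:ℝ) < ‖w‖ := by
    have h2 : (0:ℝ) < ‖w‖ ^ 2 := by
      rw [hw2]
      have := sq_lt_sq' (abs_lt.mp habsq).1 (abs_lt.mp habsq).2
      linarith
    nlinarith [norm_nonneg w]
  -- step 2 : normalize
  set wn : EuclideanSpace ℝ (Fin n) := ‖w‖⁻¹ • w with hwn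
  have hwn1 : ‖wn‖ = 1 := by
    rw [hwn, norm_smul, Real.norm_eq_abs, abs_of_pos (inv_pos.mpr hwpos),
      inv_mul_cancel₀ hwpos.ne']
  have hSet2 : {g : EuclideanSpace ℝ (Fin n) | c ≤ (inner ℝ g w : ℝ)}
      = {g : EuclideanSpace ℝ (Fin n) | c / ‖w‖ ≤ (inner ℝ g wn : ℝ)} := by
    ext g
    simp only [Set.mem_setOf_eq, hwn, real_inner_smul_right]
    rw [inv_mul_eq_div]
    exact (div_le_div_iff_of_pos_right hwpos).symm
  -- trigonometry
  have harg : (‖s‖ ^ 2 + δ ^ 2 - ‖s'‖ ^ 2) / (2 * ‖s‖ * δ) = q / δ := by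
    have hq' : q = ‖s‖⁻¹ * (‖s‖ ^ 2 - (inner ℝ s s' : ℝ)) := by
      rw [hq, hu, hv]
      simp only [inner_neg_left, real_inner_smul_left, inner_sub_right,
        real_inner_self_eq_norm_sq]
      ring
    have hδ2 : δ ^ 2 = ‖s‖ ^ 2 - 2 * (inner ℝ s s' : ℝ) + ‖s'‖ ^ 2 := by
      rw [hδdef, norm_sub_sq_real]
    rw [hq', hδ2]
    field_simp
    ring
  have hcos : Real.cos θ = q / δ := by
    rw [hθ, harg, Real.cos_arccos]
    · rw [le_div_iff₀ hδ]
      have := (abs_lt.mp habsq).1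
      linarith
    · rw [div_le_one hδ]
      have := (abs_lt.mp habsq).2
      linarith
  have hsin : Real.sin θ = Real.sqrt (1 - (q / δ) ^ 2) := by
    rw [hθ, harg, Real.sin_arccos]
  have hsinpos : 0 < Real.sin θ := by
    rw [hsin]
    apply Real.sqrt_pos.mpr
    have h5 : (q / δ) ^ 2 < 1 := by
      rw [div_pow, div_lt_one (by positivity)]
      have := sq_lt_sq' (abs_lt.mp habsq).1 (abs_lt.mp habsq).2
      linarith
    linarith
  have hwnorm : ‖w‖ = δ * Real.sin θ := by
    have h1 : δ * Real.sin θ = Real.sqrt (δ ^ 2 - q ^ 2) := by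
      rw [hsin, ← Real.sqrt_sq hδ.le, ← Real.sqrt_mul (sq_nonneg δ)]
      congr 1
      field_simp
      rw [Real.sq_sqrt (sq_nonneg δ)]
    rw [h1, ← hw2, Real.sqrt_sq (norm_nonneg w)]
  have hfinal : c / ‖w‖ = β z := by
    rw [hβ z, hc, hwnorm, hcos, hδv]
    field_simp
  rw [hSet, hSet2, gaussianVec_halfspace hn hσ wn hwn1 (c / ‖w‖),
    gaussianReal_Ici_toReal hσ, hfinal]
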